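/- Convergence of the first moments in the co-moving frame: let α, β, v > 0, S₀, M₀ ≥ 0 with S₀ + M₀ = 1, and set c = v·α/(α+β). Suppose 𝒮₀, 𝓜₀ solve the zeroth-moment system with 𝒮₀(0) = S₀, 𝓜₀(0) = M₀, and 𝒮₁, 𝓜₁ : [0,∞) → ℝ are differentiable with 𝒮₁'(t) = −α·𝒮₁(t) + β·𝓜₁(t) − c·𝒮₀(t), 𝓜₁'(t) = α·𝒮₁(t) − β·𝓜₁(t) − (c−v)·𝓜₀(t), and 𝒮₁(0) = 𝓜₁(0) = 0. Then as t → ∞, 𝒮₁(t) → (β v/(α+β)³)·(β·M₀ − α·(1+S₀)) and 𝓜₁(t) → (α v/(α+β)³)·(−α·S₀ + β·(1+M₀)). -/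

import Mathlib

open Real Filter

private lemma div_formula' {X C D E' : ℝ} (hE : E' ≠ 0) (h : (X - C) * E' = D) :
    X = C + D / E' := by
  have h2 : X - C = D / E' := by rw [eq_div_iff hE]; exact h
  linarith

private lemma const_of_deriv_zero' (g : ℝ → ℝ) (h : ∀ t, 0 ≤ t → HasDerivAt g 0 t)
    {t : ℝ} (ht : 0 ≤ t) : g t = g 0 := by
  have hcont : ContinuousOn g (Set.Icc 0 t) := fun x hx =>
    ((h x hx.1).continuousAt).continuousWithinAt
  have hderiv : ∀ x ∈ Set.Ico 0 t, HasDerivWithinAt g 0 (Set.Ici x) x := fun x hx =>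
    (h x hx.1).hasDerivWithinAt
  exact constant_of_has_deriv_right_zero hcont hderiv t (Set.right_mem_Icc.2 ht)

/-- Convergence of the first moments in the co-moving frame of the telegrapher's model. -/
theorem first_moments_converge (α β v S₀ M₀ : ℝ)
    (hα : 0 < α) (hβ : 0 < β) (hv : 0 < v)
    (hS₀ : 0 ≤ S₀) (hM₀ : 0 ≤ M₀) (hsum : S₀ + M₀ = 1)
    (S0 M0 S1 M1 : ℝ → ℝ)
    (hS0' : ∀ t : ℝ, 0 ≤ t → HasDerivAt S0 (-α * S0 t + β * M0 t) t)
    (hM0' : ∀ t : ℝ, 0 ≤ t → HasDerivAt M0 (α * S0 t - β * M0 t) t)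
    (hS0init : S0 0 = S₀) (hM0init : M0 0 = M₀)
    (hS1' : ∀ t : ℝ, 0 ≤ t →
      HasDerivAt S1 (-α * S1 t + β * M1 t - (v * α / (α + β)) * S0 t) t)
    (hM1' : ∀ t : ℝ, 0 ≤ t →
      HasDerivAt M1 (α * S1 t - β * M1 t - (v * α / (α + β) - v) * M0 t) t)
    (hS1init : S1 0 = 0) (hM1init : M1 0 = 0) :
    Tendsto S1 atTop (nhds ((β * v / (α + β) ^ 3) * (β * M₀ - α * (1 + S₀)))) ∧
    Tendsto M1 atTop (nhds ((α * v / (α + β) ^ 3) * (-α * S₀ + β * (1 + M₀)))) := by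
  obtain rfl : S₀ = 1 - M₀ := by linarith
  have hl : (0:ℝ) < α + β := by linarith
  have hl0 : (α + β) ≠ 0 := ne_of_gt hl
  have hEne : ∀ s : ℝ, Real.exp ((α+β)*s) ≠ 0 := fun s => Real.exp_ne_zero _
  have hEd : ∀ s : ℝ, HasDerivAt (fun r => Real.exp ((α+β)*r))
      (Real.exp ((α+β)*s) * (α+β)) s := by
    intro s
    simpa using (HasDerivAt.exp ((hasDerivAt_id s).const_mul (α+β)))
  -- Step A : conservation
  have hsum' : ∀ t, 0 ≤ t → S0 t + M0 t = 1 := by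
    intro t ht
    have key : ∀ s, 0 ≤ s → HasDerivAt (fun r => S0 r + M0 r) 0 s := by
      intro s hs
      have h := (hS0' s hs).add (hM0' s hs)
      have e0 : (-α * S0 s + β * M0 s) + (α * S0 s - β * M0 s) = 0 := by ring
      rwa [e0] at h
    have h := const_of_deriv_zero' _ key ht
    simp only [hS0init, hM0init] at h
    linarith
  -- Step B : explicit zeroth moments
  have hS0eq : ∀ t, 0 ≤ t →
      S0 t = β/(α+β) + ((1 - M₀) - β/(α+β)) / Real.exp ((α+β)*t) := by
    intro t ht
    have key : ∀ s, 0 ≤ s →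
        HasDerivAt (fun r => (S0 r - β/(α+β)) * Real.exp ((α+β)*r)) 0 s := by
      intro s hs
      have h := ((hS0' s hs).sub_const (β/(α+β))).mul (hEd s)
      have hm : M0 s = 1 - S0 s := by linarith [hsum' s hs]
      have e0 : (-α * S0 s + β * M0 s) * Real.exp ((α+β)*s)
          + (S0 s - β/(α+β)) * (Real.exp ((α+β)*s) * (α+β)) = 0 := by
        rw [hm]; field_simp; ring
      rwa [e0] at h
    have h := const_of_deriv_zero' _ key ht
    simp only [mul_zero, Real.exp_zero, mul_one, hS0init] at h
    exact div_formula' (hEne t) h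
  have hM0eq : ∀ t, 0 ≤ t →
      M0 t = α/(α+β) + (M₀ - α/(α+β)) / Real.exp ((α+β)*t) := by
    intro t ht
    have h1 : M0 t = 1 - S0 t := by linarith [hsum' t ht]
    rw [h1, hS0eq t ht]
    field_simp
    ring
  -- Step C : sum of first moments
  have hUeq : ∀ t, 0 ≤ t →
      S1 t + M1 t = (v*(M₀*(α+β) - α)/(α+β)^2) * (1 - 1 / Real.exp ((α+β)*t)) := by
    intro t ht
    have key : ∀ s, 0 ≤ s →
        HasDerivAt (fun r => S1 r + M1 r
          + (v*(M₀*(α+β) - α)/(α+β)^2) / Real.exp ((α+β)*r)) 0 s := by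
      intro s hs
      have hinv : HasDerivAt (fun r => (v*(M₀*(α+β) - α)/(α+β)^2) / Real.exp ((α+β)*r))
          ((v*(M₀*(α+β) - α)/(α+β)^2) * (-(Real.exp ((α+β)*s) * (α+β)) / (Real.exp ((α+β)*s))^2)) s := by
        refine ((hasDerivAt_const s (v*(M₀*(α+β) - α)/(α+β)^2)).div (hEd s) (hEne s)).congr_deriv ?_
        ring
      have h := ((hS1' s hs).add (hM1' s hs)).add hinv
      have e0 : ((-α * S1 s + β * M1 s - (v * α / (α + β)) * S0 s)
          + (α * S1 s - β * M1 s - (v * α / (α + β) - v) * M0 s))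
          + ((v*(M₀*(α+β) - α)/(α+β)^2) * (-(Real.exp ((α+β)*s) * (α+β)) / (Real.exp ((α+β)*s))^2)) = 0 := by
        rw [hS0eq s hs, hM0eq s hs]
        field_simp
        ring
      rwa [e0] at h
    have h := const_of_deriv_zero' _ key ht
    simp only [mul_zero, Real.exp_zero, hS1init, hM1init, zero_add, div_one] at h
    rw [mul_sub, mul_one]
    rw [mul_one_div]
    linarith
  -- Step D : explicit S1
  have hS1eq : ∀ t, 0 ≤ t →
      S1 t = (β*v*((α+β)*M₀ - 2*α)/(α+β)^3)
        + ((v*(α-β)*((α+β)*M₀ - α)/(α+β)^2) * t - β*v*((α+β)*M₀ - 2*α)/(α+β)^3)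
          / Real.exp ((α+β)*t) := by
    intro t ht
    have key : ∀ s, 0 ≤ s →
        HasDerivAt (fun r => (S1 r - β*v*((α+β)*M₀ - 2*α)/(α+β)^3) * Real.exp ((α+β)*r)
          - (v*(α-β)*((α+β)*M₀ - α)/(α+β)^2) * r) 0 s := by
      intro s hs
      have h := (((hS1' s hs).sub_const (β*v*((α+β)*M₀ - 2*α)/(α+β)^3)).mul (hEd s)).sub
        ((hasDerivAt_id s).const_mul (v*(α-β)*((α+β)*M₀ - α)/(α+β)^2))
      have hm1 : M1 s = (v*(M₀*(α+β) - α)/(α+β)^2) * (1 - 1 / Real.exp ((α+β)*s)) - S1 s := by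
        linarith [hUeq s hs]
      have e0 : (-α * S1 s + β * M1 s - (v * α / (α + β)) * S0 s) * Real.exp ((α+β)*s)
          + (S1 s - β*v*((α+β)*M₀ - 2*α)/(α+β)^3) * (Real.exp ((α+β)*s) * (α+β))
          - (v*(α-β)*((α+β)*M₀ - α)/(α+β)^2) * 1 = 0 := by
        rw [hm1, hS0eq s hs]
        field_simp
        ring
      rwa [e0] at h
    have h := const_of_deriv_zero' _ key ht
    simp only [mul_zero, Real.exp_zero, mul_one, hS1init, zero_sub] at h
    have h' : (S1 t - β*v*((α+β)*M₀ - 2*α)/(α+β)^3) * Real.exp ((α+β)*t)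
        = (v*(α-β)*((α+β)*M₀ - α)/(α+β)^2) * t - β*v*((α+β)*M₀ - 2*α)/(α+β)^3 := by
      linarith
    exact div_formula' (hEne t) h'
  -- Limits
  have hmul : Tendsto (fun t : ℝ => (α+β)*t) atTop atTop :=
    Tendsto.const_mul_atTop hl tendsto_id
  have hexp0 : Tendsto (fun t : ℝ => Real.exp (-((α+β)*t))) atTop (nhds 0) :=
    Real.tendsto_exp_neg_atTop_nhds_zero.comp hmul
  have hte : Tendsto (fun t : ℝ => t * Real.exp (-((α+β)*t))) atTop (nhds 0) := by
    have base := Real.tendsto_pow_mul_exp_neg_atTop_nhds_zero 1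
    have comp : Tendsto (fun t : ℝ => ((α+β)*t)^1 * Real.exp (-((α+β)*t))) atTop (nhds 0) :=
      base.comp hmul
    have h2 := comp.const_mul (1/(α+β))
    rw [mul_zero] at h2
    refine h2.congr (fun t => ?_)
    field_simp
  -- limit of S1
  have hS1lim : Tendsto S1 atTop (nhds (β*v*((α+β)*M₀ - 2*α)/(α+β)^3)) := by
    have hfor : Tendsto (fun t : ℝ => (β*v*((α+β)*M₀ - 2*α)/(α+β)^3)
        + ((v*(α-β)*((α+β)*M₀ - α)/(α+β)^2) * (t * Real.exp (-((α+β)*t)))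
          - (β*v*((α+β)*M₀ - 2*α)/(α+β)^3) * Real.exp (-((α+β)*t)))) atTop
        (nhds ((β*v*((α+β)*M₀ - 2*α)/(α+β)^3) + ((v*(α-β)*((α+β)*M₀ - α)/(α+β)^2) * 0
          - (β*v*((α+β)*M₀ - 2*α)/(α+β)^3) * 0))) :=
      tendsto_const_nhds.add ((hte.const_mul _).sub (hexp0.const_mul _))
    simp only [mul_zero, sub_zero, add_zero] at hfor
    refine hfor.congr' ?_
    filter_upwards [eventually_ge_atTop (0:ℝ)] with t ht
    rw [hS1eq t ht, Real.exp_neg, div_eq_mul_inv]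
    ring
  have hM1lim : Tendsto M1 atTop (nhds ((v*(M₀*(α+β) - α)/(α+β)^2)
      - β*v*((α+β)*M₀ - 2*α)/(α+β)^3)) := by
    have hU : Tendsto (fun t : ℝ => (v*(M₀*(α+β) - α)/(α+β)^2)
        * (1 - Real.exp (-((α+β)*t)))) atTop
        (nhds ((v*(M₀*(α+β) - α)/(α+β)^2) * (1 - 0))) :=
      (tendsto_const_nhds.sub hexp0).const_mul _
    have h := hU.sub hS1lim
    have h2 : Tendsto M1 atTop (nhds ((v*(M₀*(α+β) - α)/(α+β)^2) * (1 - 0)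
        - β*v*((α+β)*M₀ - 2*α)/(α+β)^3)) := by
      refine h.congr' ?_
      filter_upwards [eventually_ge_atTop (0:ℝ)] with t ht
      have hu := hUeq t ht
      rw [one_div] at hu
      rw [Real.exp_neg]
      linarith
    simpa using h2
  constructor
  · convert hS1lim using 2
    field_simp
    ring
  · convert hM1lim using 2
    field_simp
    ring
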